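/- Let G be a finite abelian group of order g ≥ 2 with left regular representation R : G → Matrix G G ℝ, and let 𝒜 ⊆ (G → ℝ) be the set of all w such that there exist t ≥ 0 and q : G → ℝ with q ≥ 0 and ∑_h q(h) = 1 satisfying Matrix.exp(t • (∑_{h∈G} q(h) • R(h) − 1)) = ∑_{μ∈G} w(μ) • R(μ). Suppose T > 0 and q : G → ℝ satisfies ∑_h q(h) = 1, q(1) = 0 and q(h) > 0 for every h ≠ 1, and let w(T) : G → ℝ be the (unique) weight vector with Matrix.exp(T • (∑_h q(h) • R(h) − 1)) = ∑_μ w(T)(μ) • R(μ). Then w(T) is an interior point of 𝒜 relative to the hyperplane of normalized weights: there exists ε > 0 such that every w' : G → ℝ with ∑_μ w'(μ) = 1 and ‖w' − w(T)‖ < ε belongs to 𝒜. Hence the boundary of the set of accessible maps comes only from generators ∑ q(h)ρ(h) − 1 with some weight q(h) = 0, i.e. from channels on the boundary of the polytope. -/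

import Mathlib

open scoped BigOperators
set_option linter.unusedSectionVars false
set_option maxHeartbeats 1000000

section Aux

variable {G : Type*} [CommGroup G] [Fintype G] [DecidableEq G]

noncomputable def Lmap (R : G → Matrix G G ℝ) : (G → ℝ) →ₗ[ℝ] Matrix G G ℝ where
  toFun m := ∑ h, m h • R h
  map_add' x y := by simp [add_smul, Finset.sum_add_distrib]
  map_smul' c x := by simp [smul_smul, Finset.smul_sum]

theorem Rmul (R : G → Matrix G G ℝ)
    (hR : ∀ g a b : G, R g a b = if a = g * b then 1 else 0) (g h : G) :
    R g * R h = R (g * h) := by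
  ext a b
  rw [Matrix.mul_apply]
  have hterm : ∀ c : G, R g a c * R h c b
      = if c = h * b then (if a = g * c then (1:ℝ) else 0) else 0 := by
    intro c
    rw [hR, hR]
    by_cases hc : c = h * b <;> simp [hc]
  rw [Finset.sum_congr rfl fun c _ => hterm c, Finset.sum_ite_eq' Finset.univ (h * b)]
  simp [hR, mul_assoc]

theorem Rone (R : G → Matrix G G ℝ)
    (hR : ∀ g a b : G, R g a b = if a = g * b then 1 else 0) :
    R 1 = 1 := by
  ext a b
  rw [hR, Matrix.one_apply]
  simp

theorem Rcoef (R : G → Matrix G G ℝ)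
    (hR : ∀ g a b : G, R g a b = if a = g * b then 1 else 0) (c : G → ℝ) (μ : G) :
    (∑ ν : G, c ν • R ν) μ 1 = c μ := by
  simp only [Matrix.sum_apply, Matrix.smul_apply, smul_eq_mul]
  have hterm : ∀ ν : G, c ν * R ν μ 1 = if μ = ν then c ν else 0 := by
    intro ν
    rw [hR]
    by_cases hν : μ = ν <;> simp [hν]
  rw [Finset.sum_congr rfl fun ν _ => hterm ν, Finset.sum_ite_eq Finset.univ μ]
  simp

theorem Rrep (R : G → Matrix G G ℝ)
    (hR : ∀ g a b : G, R g a b = if a = g * b then 1 else 0) (X : Matrix G G ℝ)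
    (hX : X ∈ Submodule.span ℝ (Set.range R)) :
    X = ∑ μ : G, X μ 1 • R μ := by
  induction hX using Submodule.span_induction with
  | mem x hx =>
    obtain ⟨g, rfl⟩ := hx
    have : ∀ μ : G, R g μ 1 = if μ = g then (1:ℝ) else 0 := by
      intro μ; rw [hR]; simp
    rw [Finset.sum_congr rfl fun μ _ => by rw [this μ, ite_smul, one_smul, zero_smul]]
    rw [Finset.sum_ite_eq' Finset.univ g]
    simp
  | zero => simp
  | add x y hx hy ihx ihy =>
    nth_rewrite 1 [ihx, ihy]
    rw [← Finset.sum_add_distrib]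
    exact Finset.sum_congr rfl fun μ _ => by rw [← add_smul]; rfl
  | smul a x hx ihx =>
    nth_rewrite 1 [ihx]
    rw [Finset.smul_sum]
    exact Finset.sum_congr rfl fun μ _ => by rw [smul_smul]; rfl

theorem span_mul_mem (R : G → Matrix G G ℝ)
    (hR : ∀ g a b : G, R g a b = if a = g * b then 1 else 0)
    {X Y : Matrix G G ℝ} (hX : X ∈ Submodule.span ℝ (Set.range R))
    (hY : Y ∈ Submodule.span ℝ (Set.range R)) :
    X * Y ∈ Submodule.span ℝ (Set.range R) := by
  rw [Rrep R hR X hX, Rrep R hR Y hY, Finset.sum_mul_sum]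
  refine Submodule.sum_mem _ fun μ _ => Submodule.sum_mem _ fun ν _ => ?_
  rw [smul_mul_assoc, mul_smul_comm, Rmul R hR]
  exact Submodule.smul_mem _ _ (Submodule.smul_mem _ _ (Submodule.subset_span ⟨μ * ν, rfl⟩))

theorem exp_mem_span (R : G → Matrix G G ℝ)
    (hR : ∀ g a b : G, R g a b = if a = g * b then 1 else 0)
    (X : Matrix G G ℝ) (hX : X ∈ Submodule.span ℝ (Set.range R)) :
    NormedSpace.exp X ∈ Submodule.span ℝ (Set.range R) := by
  letI : SeminormedRing (Matrix G G ℝ) := Matrix.linftyOpSemiNormedRing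
  letI : NormedRing (Matrix G G ℝ) := Matrix.linftyOpNormedRing
  letI : NormedAlgebra ℝ (Matrix G G ℝ) := Matrix.linftyOpNormedAlgebra
  letI : CompleteSpace (Matrix G G ℝ) := FiniteDimensional.complete ℝ _
  have hpow : ∀ n : ℕ, X ^ n ∈ Submodule.span ℝ (Set.range R) := by
    intro n
    induction n with
    | zero => rw [pow_zero, ← Rone R hR]; exact Submodule.subset_span ⟨1, rfl⟩
    | succ n ih => rw [pow_succ]; exact span_mul_mem R hR ih hX
  have hsummable : Summable fun n : ℕ => ((n.factorial : ℝ))⁻¹ • X ^ n :=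
    NormedSpace.expSeries_summable' (𝕂 := ℝ) X
  have hclosed : IsClosed ((Submodule.span ℝ (Set.range R) : Submodule ℝ (Matrix G G ℝ)) : Set (Matrix G G ℝ)) :=
    Submodule.closed_of_finiteDimensional _
  have key : (∑' n : ℕ, ((n.factorial : ℝ))⁻¹ • X ^ n) ∈ Submodule.span ℝ (Set.range R) := by
    refine hclosed.mem_of_tendsto hsummable.hasSum.tendsto_sum_nat
      (Filter.Eventually.of_forall fun n => ?_)
    exact Submodule.sum_mem _ fun i _ => Submodule.smul_mem _ _ (hpow i)
  have goal' : NormedSpace.exp X ∈ Submodule.span ℝ (Set.range R) := by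
    rw [congrFun (NormedSpace.exp_eq_tsum (𝕂 := ℝ)) X]
    exact key
  exact goal'


theorem exp_colsum (R : G → Matrix G G ℝ)
    (hR : ∀ g a b : G, R g a b = if a = g * b then 1 else 0) (m : G → ℝ) :
    ∑ a : G, (NormedSpace.exp (Lmap R m)) a 1 = Real.exp (∑ h : G, m h) := by
  letI : SeminormedRing (Matrix G G ℝ) := Matrix.linftyOpSemiNormedRing
  letI : NormedRing (Matrix G G ℝ) := Matrix.linftyOpNormedRing
  letI : NormedAlgebra ℝ (Matrix G G ℝ) := Matrix.linftyOpNormedAlgebra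
  letI : CompleteSpace (Matrix G G ℝ) := FiniteDimensional.complete ℝ _
  have hφcont : Continuous (fun X : Matrix G G ℝ => ∑ a : G, X a 1) :=
    continuous_finset_sum _ fun a _ => (continuous_apply (1 : G)).comp (continuous_apply a)
  let φlin : Matrix G G ℝ →ₗ[ℝ] ℝ :=
    { toFun := fun X => ∑ a : G, X a 1
      map_add' := fun X Y => by
        simp [Matrix.add_apply, Finset.sum_add_distrib]
      map_smul' := fun c X => by
        simp [Matrix.smul_apply, Finset.mul_sum, smul_eq_mul] }
  let φ : Matrix G G ℝ →L[ℝ] ℝ := ⟨φlin, hφcont⟩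
  have hcol : ∀ b : G, ∑ a : G, (Lmap R m) a b = ∑ h : G, m h := by
    intro b
    simp only [Lmap, LinearMap.coe_mk, AddHom.coe_mk, Matrix.sum_apply, Matrix.smul_apply,
      smul_eq_mul]
    rw [Finset.sum_comm]
    refine Finset.sum_congr rfl fun h _ => ?_
    rw [← Finset.mul_sum]
    have hone : ∑ a : G, R h a b = 1 := by
      rw [Finset.sum_congr rfl fun a _ => hR h a b, Finset.sum_ite_eq' Finset.univ (h * b)]
      simp
    rw [hone, mul_one]
  have hpowcol : ∀ n : ℕ, ∀ b : G, ∑ a : G, ((Lmap R m) ^ n) a b = (∑ h : G, m h) ^ n := by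
    intro n
    induction n with
    | zero =>
      intro b
      simp only [pow_zero]
      rw [Finset.sum_congr rfl fun a _ => Matrix.one_apply (i := a) (j := b),
        Finset.sum_ite_eq' Finset.univ b]
      simp
    | succ n ih =>
      intro b
      rw [pow_succ]
      calc ∑ a : G, ((Lmap R m) ^ n * Lmap R m) a b
          = ∑ a : G, ∑ c : G, ((Lmap R m) ^ n) a c * (Lmap R m) c b := by
            simp [Matrix.mul_apply]
        _ = ∑ c : G, (∑ a : G, ((Lmap R m) ^ n) a c) * (Lmap R m) c b := by
            rw [Finset.sum_comm]
            exact Finset.sum_congr rfl fun c _ => (Finset.sum_mul _ _ _).symm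
        _ = ∑ c : G, (∑ h : G, m h) ^ n * (Lmap R m) c b := by
            exact Finset.sum_congr rfl fun c _ => by rw [ih c]
        _ = (∑ h : G, m h) ^ n * ∑ c : G, (Lmap R m) c b := by rw [Finset.mul_sum]
        _ = (∑ h : G, m h) ^ (n + 1) := by rw [hcol b, pow_succ]
  have hsummable : Summable fun n : ℕ => ((n.factorial : ℝ))⁻¹ • (Lmap R m) ^ n :=
    NormedSpace.expSeries_summable' (𝕂 := ℝ) (Lmap R m)
  have h1 : φ (NormedSpace.exp (Lmap R m))
      = ∑' n : ℕ, φ (((n.factorial : ℝ))⁻¹ • (Lmap R m) ^ n) := by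
    rw [congrFun (NormedSpace.exp_eq_tsum (𝕂 := ℝ)) (Lmap R m)]
    exact φ.map_tsum hsummable
  have h2 : ∀ n : ℕ, φ (((n.factorial : ℝ))⁻¹ • (Lmap R m) ^ n)
      = ((n.factorial : ℝ))⁻¹ • (∑ h : G, m h) ^ n := by
    intro n
    rw [map_smul]
    congr 1
    exact hpowcol n 1
  have h3 : Real.exp (∑ h : G, m h) = ∑' n : ℕ, ((n.factorial : ℝ))⁻¹ • (∑ h : G, m h) ^ n := by
    rw [Real.exp_eq_exp_ℝ]
    exact congrFun (NormedSpace.exp_eq_tsum (𝕂 := ℝ)) _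
  show φ (NormedSpace.exp (Lmap R m)) = Real.exp (∑ h : G, m h)
  rw [h1, tsum_congr h2, h3]

theorem exp_scalar_add (c : ℝ) (B : Matrix G G ℝ) :
    NormedSpace.exp (c • (1 : Matrix G G ℝ) + B)
      = Real.exp c • NormedSpace.exp B := by
  letI : SeminormedRing (Matrix G G ℝ) := Matrix.linftyOpSemiNormedRing
  letI : NormedRing (Matrix G G ℝ) := Matrix.linftyOpNormedRing
  letI : NormedAlgebra ℝ (Matrix G G ℝ) := Matrix.linftyOpNormedAlgebra
  letI : CompleteSpace (Matrix G G ℝ) := FiniteDimensional.complete ℝ _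
  have hexpc : NormedSpace.exp (c • (1 : Matrix G G ℝ))
      = Real.exp c • (1 : Matrix G G ℝ) := by
    calc NormedSpace.exp (c • (1 : Matrix G G ℝ))
        = NormedSpace.exp (algebraMap ℝ (Matrix G G ℝ) c) := by
          rw [Algebra.algebraMap_eq_smul_one]
      _ = algebraMap ℝ (Matrix G G ℝ) (NormedSpace.exp c) :=
          (NormedSpace.algebraMap_exp_comm c).symm
      _ = algebraMap ℝ (Matrix G G ℝ) (Real.exp c) := by rw [Real.exp_eq_exp_ℝ]
      _ = Real.exp c • (1 : Matrix G G ℝ) := Algebra.algebraMap_eq_smul_one _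
  have key : NormedSpace.exp (c • (1 : Matrix G G ℝ) + B)
      = Real.exp c • NormedSpace.exp B := by
    rw [Matrix.exp_add_of_commute _ _ ((Commute.one_left B).smul_left c), hexpc,
      smul_mul_assoc, one_mul]
  exact key


theorem expMap_nhds (R : G → Matrix G G ℝ)
    (hR : ∀ g a b : G, R g a b = if a = g * b then 1 else 0) (m₀ : G → ℝ) :
    Filter.map (fun m : G → ℝ => fun μ : G => (NormedSpace.exp (Lmap R m)) μ 1) (nhds m₀)
      = nhds (fun μ : G => (NormedSpace.exp (Lmap R m₀)) μ 1) := by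
  letI : SeminormedRing (Matrix G G ℝ) := Matrix.linftyOpSemiNormedRing
  letI : NormedRing (Matrix G G ℝ) := Matrix.linftyOpNormedRing
  letI : NormedAlgebra ℝ (Matrix G G ℝ) := Matrix.linftyOpNormedAlgebra
  letI : CompleteSpace (Matrix G G ℝ) := FiniteDimensional.complete ℝ _
  have hLmem : ∀ x : G → ℝ, Lmap R x ∈ Submodule.span ℝ (Set.range R) := fun x =>
    Submodule.sum_mem _ fun h _ => Submodule.smul_mem _ _ (Submodule.subset_span ⟨h, rfl⟩)
  have hLcont : Continuous fun m : G → ℝ => Lmap R m := by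
    show Continuous fun m : G → ℝ => ∑ h : G, m h • R h
    exact continuous_finset_sum _ fun h _ => ((continuous_apply h).smul continuous_const)
  let Lc : (G → ℝ) →L[ℝ] Matrix G G ℝ := ⟨Lmap R, hLcont⟩
  let πlin : Matrix G G ℝ →ₗ[ℝ] (G → ℝ) :=
    { toFun := fun X => fun μ => X μ 1
      map_add' := fun X Y => rfl
      map_smul' := fun c X => rfl }
  have hπcont : Continuous fun X : Matrix G G ℝ => (fun μ : G => X μ 1) :=
    continuous_pi fun μ => (continuous_apply (1 : G)).comp (continuous_apply μ)
  let πc : Matrix G G ℝ →L[ℝ] (G → ℝ) := ⟨πlin, hπcont⟩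
  set E₀ := NormedSpace.exp (Lmap R m₀) with hE₀
  have hcommR : ∀ x y : G → ℝ, Commute (Lmap R x) (Lmap R y) := by
    intro x y
    show Commute (∑ h : G, x h • R h) (∑ h : G, y h • R h)
    refine Commute.sum_left _ _ _ fun h _ => Commute.sum_right _ _ _ fun k _ => ?_
    have hRhk : Commute (R h) (R k) := by
      show R h * R k = R k * R h
      rw [Rmul R hR, Rmul R hR, mul_comm h k]
    exact (hRhk.smul_left (x h)).smul_right (y k)
  have hsplit : ∀ m : G → ℝ, NormedSpace.exp (Lmap R m)
      = E₀ * NormedSpace.exp (Lmap R (m - m₀)) := by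
    intro m
    have h1 : Lmap R m₀ + Lmap R (m - m₀) = Lmap R m := by
      rw [← map_add]
      congr 1
      abel
    rw [← h1, Matrix.exp_add_of_commute _ _ (hcommR m₀ (m - m₀))]
  have hsub : HasStrictFDerivAt (fun m : G → ℝ => Lmap R (m - m₀)) Lc m₀ := by
    have heq : (fun m : G → ℝ => Lmap R (m - m₀)) = fun m : G → ℝ => Lc m - Lc m₀ := by
      funext m
      show Lmap R (m - m₀) = Lmap R m - Lmap R m₀
      rw [map_sub]
    rw [heq]
    exact Lc.hasStrictFDerivAt.sub_const (Lc m₀)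
  have hexp0 : HasStrictFDerivAt (NormedSpace.exp : Matrix G G ℝ → Matrix G G ℝ)
      (1 : Matrix G G ℝ →L[ℝ] Matrix G G ℝ) (Lmap R (m₀ - m₀)) := by
    rw [sub_self, map_zero]
    exact hasStrictFDerivAt_exp_zero
  have h2 := hexp0.comp m₀ hsub
  have h3 := h2.const_mul E₀
  have h4 := πc.hasStrictFDerivAt.comp m₀ h3
  set D := πc.comp (E₀ • ((1 : Matrix G G ℝ →L[ℝ] Matrix G G ℝ).comp Lc)) with hDdef
  have h5 : HasStrictFDerivAt
      (fun m : G → ℝ => fun μ : G => (NormedSpace.exp (Lmap R m)) μ 1) D m₀ := by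
    refine h4.congr_of_eventuallyEq (Filter.Eventually.of_forall fun m => ?_)
    show πc (E₀ * NormedSpace.exp (Lmap R (m - m₀)))
      = (fun μ : G => (NormedSpace.exp (Lmap R m)) μ 1)
    funext μ
    show (E₀ * NormedSpace.exp (Lmap R (m - m₀))) μ 1 = (NormedSpace.exp (Lmap R m)) μ 1
    rw [← hsplit m]
  have hker : ∀ δ : G → ℝ, D δ = 0 → δ = 0 := by
    intro δ hδ
    have hDδ : ∀ μ : G, (E₀ * Lmap R δ) μ 1 = 0 := by
      intro μ
      have : D δ μ = (0 : G → ℝ) μ := by rw [hδ]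
      exact this
    have hmem : E₀ * Lmap R δ ∈ Submodule.span ℝ (Set.range R) :=
      span_mul_mem R hR (exp_mem_span R hR _ (hLmem m₀)) (hLmem δ)
    have hzero : E₀ * Lmap R δ = 0 := by
      rw [Rrep R hR _ hmem]
      rw [Finset.sum_congr rfl fun μ _ => by rw [hDδ μ, zero_smul]]
      simp
    have hunit : IsUnit E₀ := Matrix.isUnit_exp (Lmap R m₀)
    have hLδ : Lmap R δ = 0 := by
      rcases hunit with ⟨u, hu⟩
      have h2' : (↑u⁻¹ : Matrix G G ℝ) * (E₀ * Lmap R δ) = (↑u⁻¹ : Matrix G G ℝ) * 0 :=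
        congrArg _ hzero
      rw [← hu, ← mul_assoc, Units.inv_mul, one_mul, mul_zero] at h2'
      exact h2'
    funext μ
    have hc : (Lmap R δ) μ 1 = δ μ := Rcoef R hR δ μ
    rw [hLδ] at hc
    simpa using hc.symm
  have hinj : Function.Injective ⇑D := by
    intro a b hab
    have h0 : D (a - b) = 0 := by rw [map_sub, hab, sub_self]
    have := hker _ h0
    exact sub_eq_zero.mp this
  have hsurj : Function.Surjective ⇑(D : (G → ℝ) →ₗ[ℝ] (G → ℝ)) :=
    (LinearMap.injective_iff_surjective).mp hinj
  let Dequiv : (G → ℝ) ≃L[ℝ] (G → ℝ) :=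
    LinearEquiv.toContinuousLinearEquiv
      (LinearEquiv.ofBijective (D : (G → ℝ) →ₗ[ℝ] (G → ℝ)) ⟨hinj, hsurj⟩)
  have hcoe : (Dequiv : (G → ℝ) →L[ℝ] (G → ℝ)) = D := by
    ext δ
    rfl
  have h6 : HasStrictFDerivAt
      (fun m : G → ℝ => fun μ : G => (NormedSpace.exp (Lmap R m)) μ 1)
      (Dequiv : (G → ℝ) →L[ℝ] (G → ℝ)) m₀ := by
    rw [hcoe]
    exact h5
  exact h6.map_nhds_eq_of_equiv

end Aux



/-- For a finite abelian group, any accessible map obtained at a finite time `T > 0`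
from a generator whose weights are strictly positive on all non-identity elements is an interior
point of the set of accessible maps (relative to the hyperplane of normalized weight vectors);
hence the boundary of the set of accessible maps comes only from generators with some vanishing
weight, i.e. from channels on the boundary of the polytope. -/
theorem interior_accessible_of_positive_weights
    {G : Type*} [CommGroup G] [Fintype G] [DecidableEq G]
    (hg : 2 ≤ Fintype.card G)
    (R : G → Matrix G G ℝ)
    (hR : ∀ g a b : G, R g a b = if a = g * b then 1 else 0)
    (A : Set (G → ℝ))
    (hA : A = {w : G → ℝ | ∃ t : ℝ, 0 ≤ t ∧ ∃ q : G → ℝ,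
      (∀ h : G, 0 ≤ q h) ∧ (∑ h : G, q h = 1) ∧
      NormedSpace.exp (t • ((∑ h : G, q h • R h) - 1)) = ∑ μ : G, w μ • R μ})
    (T : ℝ) (hT : 0 < T)
    (q : G → ℝ) (hqsum : ∑ h : G, q h = 1) (hq1 : q 1 = 0)
    (hqpos : ∀ h : G, h ≠ 1 → 0 < q h)
    (w : G → ℝ)
    (hw : NormedSpace.exp (T • ((∑ h : G, q h • R h) - 1)) = ∑ μ : G, w μ • R μ) :
    ∃ ε : ℝ, 0 < ε ∧
      ∀ w' : EuclideanSpace ℝ G, (∑ μ : G, w' μ = 1) →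
        ‖w' - (show EuclideanSpace ℝ G from WithLp.toLp 2 w)‖ < ε → (show G → ℝ from w') ∈ A := by
  classical
  have hLmem : ∀ x : G → ℝ, Lmap R x ∈ Submodule.span ℝ (Set.range R) := fun x =>
    Submodule.sum_mem _ fun h _ => Submodule.smul_mem _ _ (Submodule.subset_span ⟨h, rfl⟩)
  set m₀ : G → ℝ := fun h => T * q h with hm₀
  have hLm₀ : Lmap R m₀ = T • (1 : Matrix G G ℝ) + T • ((∑ h : G, q h • R h) - 1) := by
    have h1 : Lmap R m₀ = T • Lmap R q := by
      rw [show m₀ = T • q from rfl, map_smul]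
    have h2 : (∑ h : G, q h • R h) = Lmap R q := rfl
    rw [h1, h2, smul_sub]
    abel
  have hfm₀ : (fun μ : G => (NormedSpace.exp (Lmap R m₀)) μ 1)
      = fun μ : G => Real.exp T * w μ := by
    funext μ
    rw [hLm₀, exp_scalar_add, hw, Matrix.smul_apply, Rcoef R hR w μ, smul_eq_mul]
  have hSopen : IsOpen {m : G → ℝ | ∀ h : G, h ≠ 1 → 0 < m h} := by
    have hset : {m : G → ℝ | ∀ h : G, h ≠ 1 → 0 < m h}
        = ⋂ h : G, {m : G → ℝ | h ≠ 1 → 0 < m h} := by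
      ext m
      simp [Set.mem_iInter]
    rw [hset]
    refine isOpen_iInter_of_finite fun h => ?_
    by_cases hh : h = 1
    · have : {m : G → ℝ | h ≠ 1 → 0 < m h} = Set.univ := by
        ext m; simp [hh]
      rw [this]
      exact isOpen_univ
    · have : {m : G → ℝ | h ≠ 1 → 0 < m h} = (fun m : G → ℝ => m h) ⁻¹' Set.Ioi 0 := by
        ext m; simp [hh]
      rw [this]
      exact (continuous_apply h).isOpen_preimage _ isOpen_Ioi
  have hSmem : m₀ ∈ {m : G → ℝ | ∀ h : G, h ≠ 1 → 0 < m h} := fun h hh =>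
    mul_pos hT (hqpos h hh)
  have hfS : (fun m : G → ℝ => fun μ : G => (NormedSpace.exp (Lmap R m)) μ 1) ''
      {m : G → ℝ | ∀ h : G, h ≠ 1 → 0 < m h}
      ∈ nhds (fun μ : G => (NormedSpace.exp (Lmap R m₀)) μ 1) := by
    rw [← expMap_nhds R hR m₀]
    exact Filter.image_mem_map (hSopen.mem_nhds hSmem)
  rw [hfm₀] at hfS
  obtain ⟨δ, hδpos, hball⟩ := Metric.mem_nhds_iff.mp hfS
  refine ⟨δ / Real.exp T, div_pos hδpos (Real.exp_pos T), ?_⟩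
  intro w' hw'sum hw'close
  have habs : ∀ μ : G, |w' μ - w μ| ≤ ‖w' - (show EuclideanSpace ℝ G from WithLp.toLp 2 w)‖ := by
    intro μ
    have h2 : ‖(w' - (show EuclideanSpace ℝ G from WithLp.toLp 2 w)) μ‖
        ≤ ‖w' - (show EuclideanSpace ℝ G from WithLp.toLp 2 w)‖ := by
      rw [EuclideanSpace.norm_eq]
      have h3 : ‖(w' - (show EuclideanSpace ℝ G from WithLp.toLp 2 w)) μ‖
          = Real.sqrt (‖(w' - (show EuclideanSpace ℝ G from WithLp.toLp 2 w)) μ‖ ^ 2) :=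
        (Real.sqrt_sq (norm_nonneg _)).symm
      rw [h3]
      apply Real.sqrt_le_sqrt
      exact Finset.single_le_sum
        (f := fun i : G => ‖(w' - (show EuclideanSpace ℝ G from WithLp.toLp 2 w)) i‖ ^ 2)
        (fun i _ => sq_nonneg _) (Finset.mem_univ μ)
    simpa [Real.norm_eq_abs] using h2
  have hyball : (fun μ : G => Real.exp T * w' μ)
      ∈ Metric.ball (fun μ : G => Real.exp T * w μ) δ := by
    rw [Metric.mem_ball, dist_eq_norm]
    have hxy : ((fun μ : G => Real.exp T * w' μ) - fun μ : G => Real.exp T * w μ)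
        = fun μ : G => Real.exp T * (w' μ - w μ) := by
      funext μ
      simp only [Pi.sub_apply]
      ring
    rw [hxy, pi_norm_lt_iff hδpos]
    intro μ
    have := habs μ
    have hcalc : ‖Real.exp T * (w' μ - w μ)‖ = Real.exp T * |w' μ - w μ| := by
      rw [Real.norm_eq_abs, abs_mul, abs_of_pos (Real.exp_pos T)]
    rw [hcalc]
    calc Real.exp T * |w' μ - w μ|
        ≤ Real.exp T * ‖w' - (show EuclideanSpace ℝ G from WithLp.toLp 2 w)‖ := by
          exact mul_le_mul_of_nonneg_left (habs μ) (le_of_lt (Real.exp_pos T))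
      _ < Real.exp T * (δ / Real.exp T) := by
          exact mul_lt_mul_of_pos_left hw'close (Real.exp_pos T)
      _ = δ := by field_simp
  obtain ⟨m', hm'S, hm'eq⟩ := hball hyball
  have hexpm' : NormedSpace.exp (Lmap R m') = ∑ μ : G, (Real.exp T * w' μ) • R μ := by
    have h1 := Rrep R hR _ (exp_mem_span R hR _ (hLmem m'))
    rw [h1]
    refine Finset.sum_congr rfl fun μ _ => ?_
    congr 1
    exact congrFun hm'eq μ
  have hsumm' : ∑ h : G, m' h = T := by
    have h1 := exp_colsum R hR m'
    have h2 : ∑ a : G, (NormedSpace.exp (Lmap R m')) a 1 = Real.exp T := by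
      calc ∑ a : G, (NormedSpace.exp (Lmap R m')) a 1
          = ∑ a : G, Real.exp T * w' a := Finset.sum_congr rfl fun a _ => congrFun hm'eq a
        _ = Real.exp T * ∑ μ : G, w' μ := by rw [Finset.mul_sum]
        _ = Real.exp T := by rw [hw'sum, mul_one]
    exact Real.exp_injective (h1.symm.trans h2)
  set s : ℝ := ∑ h ∈ Finset.univ.erase (1 : G), m' h with hs
  have hs_nonneg : 0 ≤ s :=
    Finset.sum_nonneg fun h hh => le_of_lt (hm'S h (Finset.ne_of_mem_erase hh))
  have hm'1 : m' 1 + s = T := by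
    rw [hs, Finset.add_sum_erase _ _ (Finset.mem_univ 1)]
    exact hsumm'
  set t : ℝ := s + 1 with ht
  have htpos : 0 < t := by linarith
  set q' : G → ℝ := fun h => if h = 1 then 1 - s / t else m' h / t with hq'
  rw [hA]
  refine ⟨t, le_of_lt htpos, q', ?_, ?_, ?_⟩
  · intro h
    by_cases hh : h = 1
    · have hst : s / t ≤ 1 := (div_le_one htpos).mpr (by linarith)
      have : q' h = 1 - s / t := by rw [hq']; simp [hh]
      rw [this]
      linarith
    · have : q' h = m' h / t := by rw [hq']; simp [hh]
      rw [this]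
      exact div_nonneg (le_of_lt (hm'S h hh)) (le_of_lt htpos)
  · rw [← Finset.add_sum_erase _ q' (Finset.mem_univ (1 : G))]
    have h1 : q' 1 = 1 - s / t := by rw [hq']; simp
    have h2 : ∑ h ∈ Finset.univ.erase (1 : G), q' h = s / t := by
      rw [hs, Finset.sum_div]
      refine Finset.sum_congr rfl fun h hh => ?_
      rw [hq']
      simp [Finset.ne_of_mem_erase hh]
    rw [h1, h2]
    ring
  · have hgen : t • ((∑ h : G, q' h • R h) - 1) = Lmap R m' - T • (1 : Matrix G G ℝ) := by
      have e1 : (∑ h : G, q' h • R h)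
          = q' 1 • (1 : Matrix G G ℝ) + ∑ h ∈ Finset.univ.erase (1 : G), q' h • R h := by
        rw [← Finset.add_sum_erase _ (fun h => q' h • R h) (Finset.mem_univ (1 : G)), Rone R hR]
      have e3 : ∑ h ∈ Finset.univ.erase (1 : G), q' h • R h
          = ∑ h ∈ Finset.univ.erase (1 : G), (m' h / t) • R h :=
        Finset.sum_congr rfl fun h hh => by
          rw [hq']
          simp [Finset.ne_of_mem_erase hh]
      have e2 : Lmap R m'
          = m' 1 • (1 : Matrix G G ℝ) + ∑ h ∈ Finset.univ.erase (1 : G), m' h • R h := by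
        show (∑ h : G, m' h • R h) = _
        rw [← Finset.add_sum_erase _ (fun h => m' h • R h) (Finset.mem_univ (1 : G)), Rone R hR]
      rw [e1, e3, e2, smul_sub, smul_add, Finset.smul_sum]
      have e4 : t • (q' 1 • (1 : Matrix G G ℝ)) = (t - s) • (1 : Matrix G G ℝ) := by
        rw [smul_smul]
        congr 1
        have : q' 1 = 1 - s / t := by rw [hq']; simp
        rw [this]
        field_simp
      have e5 : ∀ h ∈ Finset.univ.erase (1 : G), t • ((m' h / t) • R h) = m' h • R h := by
        intro h hh
        rw [smul_smul]
        congr 1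
        field_simp
      rw [e4, Finset.sum_congr rfl e5]
      have e6 : (t - s) • (1 : Matrix G G ℝ) - t • (1 : Matrix G G ℝ)
          = m' 1 • (1 : Matrix G G ℝ) - T • (1 : Matrix G G ℝ) := by
        rw [← sub_smul, ← sub_smul]
        congr 1
        linarith
      calc (t - s) • (1 : Matrix G G ℝ) + (∑ h ∈ Finset.univ.erase (1 : G), m' h • R h)
            - t • (1 : Matrix G G ℝ)
          = ((t - s) • (1 : Matrix G G ℝ) - t • (1 : Matrix G G ℝ))
            + ∑ h ∈ Finset.univ.erase (1 : G), m' h • R h := by abel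
        _ = (m' 1 • (1 : Matrix G G ℝ) - T • (1 : Matrix G G ℝ))
            + ∑ h ∈ Finset.univ.erase (1 : G), m' h • R h := by rw [e6]
        _ = m' 1 • (1 : Matrix G G ℝ) + (∑ h ∈ Finset.univ.erase (1 : G), m' h • R h)
            - T • (1 : Matrix G G ℝ) := by abel
    rw [hgen]
    have h1 : Lmap R m' - T • (1 : Matrix G G ℝ)
        = (-T) • (1 : Matrix G G ℝ) + Lmap R m' := by
      rw [neg_smul]
      abel
    rw [h1, exp_scalar_add, hexpm', Finset.smul_sum]
    refine Finset.sum_congr rfl fun μ _ => ?_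
    rw [smul_smul, Real.exp_neg, ← mul_assoc, inv_mul_cancel₀ (Real.exp_ne_zero T), one_mul]
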